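/- arXiv:2407.19333 — 2 statements merged into one kernel-verified Lean document; each statement's English description precedes it below -/
import Mathlib

section
/- The limit as α → 0⁺ of sinh(α)² / (φ(α)² − 1) equals 2, where φ(α) = ∫₀¹ cosh(α cos(2πs)) ds. -/
open Real MeasureTheory Filter Set Topology

noncomputable def phi (α : ℝ) : ℝ := ∫ s in (0:ℝ)..1, Real.cosh (α * Real.cos (2 * Real.pi * s))

lemma cosh_sub_one_eq (x : ℝ) : Real.cosh x - 1 = 2 * Real.sinh (x/2) ^ 2 := by
  have h := Real.cosh_two_mul (x/2)
  have h2 : 2 * (x/2) = x := by ring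
  rw [h2] at h
  rw [h, Real.cosh_sq]
  ring

lemma sq_le_cosh_sub_one (x : ℝ) : x ^ 2 / 2 ≤ Real.cosh x - 1 := by
  rw [cosh_sub_one_eq]
  have h : |x/2| ≤ |Real.sinh (x/2)| := by
    rw [Real.abs_sinh]
    exact Real.self_le_sinh_iff.2 (abs_nonneg _)
  have h2 := pow_le_pow_left₀ (abs_nonneg (x/2)) h 2
  rw [sq_abs, sq_abs] at h2
  nlinarith

lemma sinh_le_mul_cosh {y : ℝ} (hy : 0 ≤ y) : Real.sinh y ≤ y * Real.cosh y := by
  have hmono : MonotoneOn (fun y => y * Real.cosh y - Real.sinh y) (Set.Ici (0:ℝ)) := by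
    apply monotoneOn_of_deriv_nonneg (convex_Ici _)
    · exact ((continuous_id.mul Real.continuous_cosh).sub Real.continuous_sinh).continuousOn
    · exact fun x _ => ((differentiableAt_id.mul Real.differentiable_cosh.differentiableAt).sub
        Real.differentiable_sinh.differentiableAt).differentiableWithinAt
    · intro x hx
      rw [interior_Ici, Set.mem_Ioi] at hx
      have hd : HasDerivAt (fun y => y * Real.cosh y - Real.sinh y) (x * Real.sinh x) x := by
        have := ((hasDerivAt_id x).mul (Real.hasDerivAt_cosh x)).sub (Real.hasDerivAt_sinh x)
        refine this.congr_deriv ?_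
        simp only [id]; ring
      rw [hd.deriv]
      exact mul_nonneg hx.le (Real.sinh_nonneg_iff.2 hx.le)
  have := hmono (Set.self_mem_Ici) (Set.mem_Ici.2 hy) hy
  simp at this
  linarith

lemma cosh_sub_one_le_aux {x : ℝ} (hx : 0 ≤ x) : Real.cosh x - 1 ≤ x ^ 2 / 2 * Real.cosh x := by
  · rw [cosh_sub_one_eq]
    have h1 : Real.sinh (x/2) ≤ (x/2) * Real.cosh (x/2) := sinh_le_mul_cosh (by linarith)
    have h2 : 0 ≤ Real.sinh (x/2) := Real.sinh_nonneg_iff.2 (by linarith)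
    have h3 : Real.sinh (x/2) ^ 2 ≤ ((x/2) * Real.cosh (x/2)) ^ 2 := by nlinarith
    have h4 : Real.cosh (x/2) ^ 2 = (Real.cosh x + 1) / 2 := by
      have h := Real.cosh_two_mul (x/2)
      have h2' : 2 * (x/2) = x := by ring
      rw [h2'] at h
      rw [h, Real.cosh_sq]; ring
    have h5 : 1 ≤ Real.cosh x := Real.one_le_cosh x
    nlinarith

lemma cosh_sub_one_le (x : ℝ) : Real.cosh x - 1 ≤ x ^ 2 / 2 * Real.cosh x := by
  have := cosh_sub_one_le_aux (abs_nonneg x)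
  rwa [Real.cosh_abs, sq_abs] at this

lemma integral_cos_sq_one : ∫ s in (0:ℝ)..1, Real.cos (2 * Real.pi * s) ^ 2 = 1/2 := by
  have hπ : (2 * Real.pi) ≠ 0 := by positivity
  have h := intervalIntegral.mul_integral_comp_mul_left (c := 2 * Real.pi) (a := (0:ℝ)) (b := 1)
    (f := fun u => Real.cos u ^ 2)
  simp only [mul_zero, mul_one] at h
  have h2 : ∫ x in (0:ℝ)..(2*Real.pi), Real.cos x ^ 2 = Real.pi := by
    rw [integral_cos_sq]
    simp [Real.sin_two_pi, Real.cos_two_pi]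
  rw [h2] at h
  have hE : ∫ s in (0:ℝ)..1, Real.cos (2 * Real.pi * s) ^ 2 = Real.pi / (2 * Real.pi) := by
    rw [eq_div_iff hπ]
    linarith
  rw [hE, div_eq_iff hπ]
  ring

lemma cont_integrand (α : ℝ) :
    Continuous (fun s : ℝ => Real.cosh (α * Real.cos (2 * Real.pi * s))) := by
  fun_prop

lemma phi_lower (α : ℝ) : 1 + α ^ 2 / 4 ≤ phi α := by
  have key : ∫ s in (0:ℝ)..1, (1 + α^2/2 * Real.cos (2 * Real.pi * s) ^ 2) = 1 + α^2/4 := by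
    rw [intervalIntegral.integral_add ((by fun_prop : Continuous fun _ : ℝ => (1:ℝ)).intervalIntegrable (μ := volume) (a := (0:ℝ)) (b := 1))
      ((by fun_prop : Continuous fun s : ℝ => α^2/2 * Real.cos (2 * Real.pi * s) ^ 2).intervalIntegrable _ _),
      intervalIntegral.integral_const_mul, integral_cos_sq_one]
    simp
    ring
  rw [← key]
  apply intervalIntegral.integral_mono_on (by norm_num)
    ((by fun_prop : Continuous fun s : ℝ => (1:ℝ) + α^2/2 * Real.cos (2 * Real.pi * s) ^ 2).intervalIntegrable _ _)
    ((cont_integrand α).intervalIntegrable _ _)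
  intro s _
  have h := sq_le_cosh_sub_one (α * Real.cos (2 * Real.pi * s))
  nlinarith [sq_nonneg (α * Real.cos (2 * Real.pi * s))]

lemma phi_upper (α : ℝ) : phi α ≤ 1 + α ^ 2 / 4 * Real.cosh α := by
  have key : ∫ s in (0:ℝ)..1, (1 + α^2/2 * Real.cosh α * Real.cos (2 * Real.pi * s) ^ 2)
      = 1 + α^2/4 * Real.cosh α := by
    rw [intervalIntegral.integral_add ((by fun_prop : Continuous fun _ : ℝ => (1:ℝ)).intervalIntegrable (μ := volume) (a := (0:ℝ)) (b := 1))
      ((by fun_prop : Continuous fun s : ℝ => α^2/2 * Real.cosh α * Real.cos (2 * Real.pi * s) ^ 2).intervalIntegrable _ _),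
      intervalIntegral.integral_const_mul, integral_cos_sq_one]
    simp
    ring
  rw [← key]
  apply intervalIntegral.integral_mono_on (by norm_num)
    ((cont_integrand α).intervalIntegrable _ _)
    ((by fun_prop : Continuous fun s : ℝ => (1:ℝ) + α^2/2 * Real.cosh α * Real.cos (2 * Real.pi * s) ^ 2).intervalIntegrable _ _)
  intro s _
  set c := Real.cos (2 * Real.pi * s) with hc
  have hcb : |c| ≤ 1 := Real.abs_cos_le_one _
  have h1 := cosh_sub_one_le (α * c)
  have h2 : Real.cosh (α * c) ≤ Real.cosh α := by
    rw [Real.cosh_le_cosh, abs_mul]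
    calc |α| * |c| ≤ |α| * 1 := by
          exact mul_le_mul_of_nonneg_left hcb (abs_nonneg _)
      _ = |α| := mul_one _
  have h3 : (0:ℝ) ≤ (α*c)^2/2 := by positivity
  have h4 : (α*c)^2/2 * Real.cosh (α*c) ≤ (α*c)^2/2 * Real.cosh α :=
    mul_le_mul_of_nonneg_left h2 h3
  have h5 : ((α*c)^2/2) * Real.cosh α = α^2/2 * Real.cosh α * c^2 := by ring
  linarith [h4, h1, h5.le, h5.ge]

theorem psi2_limit :
    Filter.Tendsto (fun α => Real.sinh α ^ 2 / (phi α ^ 2 - 1))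
      (nhdsWithin 0 (Set.Ioi 0)) (nhds 2) := by
  have hslope : Tendsto (fun α => Real.sinh α / α) (nhdsWithin 0 (Set.Ioi 0)) (nhds 1) := by
    have h := Real.hasDerivAt_sinh 0
    rw [Real.cosh_zero] at h
    have h2 := hasDerivAt_iff_tendsto_slope.mp h
    have h3 := h2.mono_left (nhdsWithin_mono _ (fun x hx => by
      simp only [Set.mem_compl_iff, Set.mem_singleton_iff]
      exact ne_of_gt hx))
    refine h3.congr (fun α => ?_)
    simp [slope_def_field, Real.sinh_zero]
  have hq : Tendsto (fun α : ℝ => 4 / (Real.cosh α * (2 + α^2/4 * Real.cosh α)))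
      (nhdsWithin 0 (Set.Ioi 0)) (nhds 2) := by
    have hc : ContinuousAt (fun α : ℝ => 4 / (Real.cosh α * (2 + α^2/4 * Real.cosh α))) 0 := by
      apply ContinuousAt.div continuousAt_const (by fun_prop)
      norm_num [Real.cosh_zero]
    have := hc.tendsto.mono_left (nhdsWithin_le_nhds (s := Set.Ioi (0:ℝ)))
    norm_num [Real.cosh_zero] at this
    exact this
  have hL : Tendsto (fun α => (Real.sinh α / α)^2 * (4 / (Real.cosh α * (2 + α^2/4 * Real.cosh α))))
      (nhdsWithin 0 (Set.Ioi 0)) (nhds 2) := by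
    have := ((hslope.pow 2).mul hq)
    norm_num at this
    exact this
  have hU : Tendsto (fun α => 2 * (Real.sinh α / α)^2) (nhdsWithin 0 (Set.Ioi 0)) (nhds 2) := by
    have := (hslope.pow 2).const_mul (2:ℝ)
    norm_num at this
    exact this
  apply tendsto_of_tendsto_of_tendsto_of_le_of_le' hL hU
  · filter_upwards [self_mem_nhdsWithin] with α hα
    have hα0 : 0 < α := hα
    have h1 := phi_lower α
    have h2 := phi_upper α
    have hcosh := Real.one_le_cosh α
    set p := phi α
    set q := α^2/4 * Real.cosh α with hq'
    have hq0 : 0 < q := by positivity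
    have hden_pos : 0 < p^2 - 1 := by nlinarith
    have hden_hi : p^2 - 1 ≤ q * (2 + q) := by nlinarith
    have hsn : (0:ℝ) ≤ Real.sinh α ^ 2 := sq_nonneg _
    have key : Real.sinh α ^ 2 / (q * (2+q)) ≤ Real.sinh α ^ 2 / (p^2 - 1) :=
      div_le_div_of_nonneg_left hsn hden_pos hden_hi
    have heq : (Real.sinh α / α)^2 * (4 / (Real.cosh α * (2 + q))) = Real.sinh α ^ 2 / (q * (2+q)) := by
      rw [hq']
      have hch : Real.cosh α ≠ 0 := by positivity
      have h2q : (2 + α^2/4 * Real.cosh α) ≠ 0 := by positivity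
      field_simp
    rw [heq]
    exact key
  · filter_upwards [self_mem_nhdsWithin] with α hα
    have hα0 : 0 < α := hα
    have h1 := phi_lower α
    have hden_lo : α^2/2 ≤ phi α^2 - 1 := by nlinarith [sq_nonneg α]
    have hpos : (0:ℝ) < α^2/2 := by positivity
    have key : Real.sinh α ^ 2 / (phi α^2 - 1) ≤ Real.sinh α ^ 2 / (α^2/2) :=
      div_le_div_of_nonneg_left (sq_nonneg _) hpos hden_lo
    have heq : Real.sinh α ^ 2 / (α^2/2) = 2 * (Real.sinh α / α)^2 := by
      field_simp
    rw [← heq] at *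
    exact key
end

section
/- The function ψ(α) = (√(2cosh(α)² − 2φ(α)) + sinh(α)) / √(φ(α)² − 1), defined for α > 0, extends to a continuous function on [0,∞); in particular ψ is bounded on any interval [0, A]. -/
open Real MeasureTheory Filter Set Topology

noncomputable def psi (α : ℝ) : ℝ :=
  (Real.sqrt (2 * Real.cosh α ^ 2 - 2 * phi α) + Real.sinh α) / Real.sqrt (phi α ^ 2 - 1)

/-- sinh x / x, extended by 1 at 0. -/
noncomputable def gg (x : ℝ) : ℝ := if x = 0 then 1 else Real.sinh x / x

lemma sinh_eq_gg (x : ℝ) : Real.sinh x = x * gg x := by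
  unfold gg
  rcases eq_or_ne x 0 with h | h
  · simp [h]
  · rw [if_neg h]; field_simp

@[fun_prop]
lemma continuous_gg : Continuous gg := by
  rw [continuous_iff_continuousAt]
  intro x
  rcases eq_or_ne x 0 with rfl | hx
  · rw [← continuousWithinAt_compl_self]
    have h1 : Tendsto (slope Real.sinh 0) (𝓝[≠] 0) (𝓝 (Real.cosh 0)) :=
      hasDerivAt_iff_tendsto_slope.mp (Real.hasDerivAt_sinh 0)
    rw [Real.cosh_zero] at h1
    have : gg 0 = 1 := by simp [gg]
    rw [ContinuousWithinAt, this]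
    refine h1.congr' ?_
    filter_upwards [self_mem_nhdsWithin] with y hy
    simp only [mem_compl_iff, mem_singleton_iff] at hy
    simp [slope, gg, hy, div_eq_inv_mul]
  · have : ∀ᶠ y in 𝓝 x, gg y = Real.sinh y / y := by
      filter_upwards [isOpen_ne.mem_nhds hx] with y hy
      simp [gg, hy]
    exact ContinuousAt.congr (by fun_prop (disch := assumption)) (this.mono fun y h => h.symm)

lemma one_le_gg (x : ℝ) : 1 ≤ gg x := by
  have key : ∀ y : ℝ, 0 ≤ y → 1 ≤ gg y := by
    intro y hy
    rcases eq_or_lt_of_le hy with rfl | hy'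
    · simp [gg]
    · have := (Real.self_lt_sinh_iff (x := y)).mpr hy'
      simp only [gg, hy'.ne', if_false]
      rw [le_div_iff₀ hy']
      linarith
  rcases le_or_gt 0 x with h | h
  · exact key x h
  · have : gg (-x) = gg x := by
      simp only [gg, neg_eq_zero]
      rcases eq_or_ne x 0 with rfl | hx
      · simp
      · simp [hx, Real.sinh_neg, neg_div_neg_eq]
    rw [← this]; exact key _ (by linarith)

/-- (cosh x - 1)/x², extended by 1/2 at 0. -/
noncomputable def hh (x : ℝ) : ℝ := gg (x / 2) ^ 2 / 2

@[fun_prop]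
lemma continuous_hh : Continuous hh := by unfold hh; fun_prop

lemma half_le_hh (x : ℝ) : 1 / 2 ≤ hh x := by
  have := one_le_gg (x / 2)
  have : 1 ≤ gg (x / 2) ^ 2 := by nlinarith
  unfold hh; linarith

lemma cosh_eq_hh (x : ℝ) : Real.cosh x = 1 + x ^ 2 * hh x := by
  have h1 : Real.cosh x = 2 * Real.sinh (x / 2) ^ 2 + 1 := by
    have := Real.cosh_two_mul (x / 2)
    have h2 := Real.cosh_sq (x / 2)
    rw [show 2 * (x / 2) = x by ring] at this
    rw [this, h2]; ring
  have h3 : Real.sinh (x / 2) = (x / 2) * gg (x / 2) := sinh_eq_gg _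
  rw [h1, h3]; unfold hh; ring

/-- the rescaled integral (phi α - 1)/α². -/
noncomputable def uu (α : ℝ) : ℝ :=
  ∫ s in (0:ℝ)..1, Real.cos (2 * Real.pi * s) ^ 2 * hh (α * Real.cos (2 * Real.pi * s))

@[fun_prop]
lemma continuous_uu : Continuous uu := by
  apply intervalIntegral.continuous_parametric_intervalIntegral_of_continuous'
  show Continuous fun p : ℝ × ℝ =>
    Real.cos (2 * Real.pi * p.2) ^ 2 * hh (p.1 * Real.cos (2 * Real.pi * p.2))
  fun_prop

lemma phi_eq (α : ℝ) : phi α = 1 + α ^ 2 * uu α := by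
  unfold phi uu
  have h1 : ∀ s : ℝ, Real.cosh (α * Real.cos (2 * Real.pi * s)) =
      1 + α ^ 2 * (Real.cos (2 * Real.pi * s) ^ 2 * hh (α * Real.cos (2 * Real.pi * s))) := by
    intro s
    rw [cosh_eq_hh (α * Real.cos (2 * Real.pi * s))]
    ring
  simp_rw [h1]
  have hc : Continuous fun s : ℝ =>
      α ^ 2 * (Real.cos (2 * Real.pi * s) ^ 2 * hh (α * Real.cos (2 * Real.pi * s))) := by
    fun_prop
  rw [intervalIntegral.integral_add intervalIntegrable_const (hc.intervalIntegrable 0 1),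
    intervalIntegral.integral_const_mul]
  simp

lemma quarter_le_uu (α : ℝ) : 1 / 4 ≤ uu α := by
  have hpi : (2 * Real.pi) ≠ 0 := by positivity
  have hbase : ∫ s in (0:ℝ)..1, Real.cos (2 * Real.pi * s) ^ 2 = 1 / 2 := by
    have h := intervalIntegral.mul_integral_comp_mul_left (a := (0:ℝ)) (b := 1)
      (f := fun x => Real.cos x ^ 2) (c := 2 * Real.pi)
    rw [mul_zero, mul_one, integral_cos_sq] at h
    simp only [Real.cos_two_pi, Real.sin_two_pi, Real.cos_zero, Real.sin_zero] at h
    have : (2 * Real.pi) * ∫ s in (0:ℝ)..1, Real.cos (2 * Real.pi * s) ^ 2 = Real.pi := by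
      rw [h]; ring
    have h2 : (2 * Real.pi) * ∫ s in (0:ℝ)..1, Real.cos (2 * Real.pi * s) ^ 2
        = (2 * Real.pi) * (1 / 2) := by rw [this]; ring
    exact mul_left_cancel₀ hpi h2
  have hint : ∫ s in (0:ℝ)..1, Real.cos (2 * Real.pi * s) ^ 2 * (1/2 : ℝ) = 1 / 4 := by
    rw [intervalIntegral.integral_mul_const, hbase]
    norm_num
  rw [← hint]
  apply intervalIntegral.integral_mono_on (by norm_num)
  · exact ((by fun_prop : Continuous fun s : ℝ => Real.cos (2 * Real.pi * s) ^ 2 * (1/2:ℝ))).intervalIntegrable 0 1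
  · exact (((by fun_prop : Continuous fun s : ℝ => Real.cos (2 * Real.pi * s) ^ 2).mul
      (continuous_hh.comp (by fun_prop))).intervalIntegrable 0 1)
  · intro s _
    have := half_le_hh (α * Real.cos (2 * Real.pi * s))
    nlinarith [sq_nonneg (Real.cos (2 * Real.pi * s))]

noncomputable def psiExt (α : ℝ) : ℝ :=
  (Real.sqrt (2 * gg α ^ 2 - 2 * uu α) + gg α) / Real.sqrt (uu α * (phi α + 1))

theorem psi_extends_continuously :
    ∃ ψ : ℝ → ℝ, ContinuousOn ψ (Set.Ici (0:ℝ)) ∧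
      (∀ α : ℝ, 0 < α → ψ α = psi α) ∧
      (∀ A : ℝ, 0 < A → ∃ M : ℝ, ∀ α ∈ Set.Icc (0:ℝ) A, ψ α ≤ M) := by
  have hphi : Continuous phi := by
    have he : phi = fun α : ℝ => 1 + α ^ 2 * uu α := funext phi_eq
    rw [he]; fun_prop
  have hden : ∀ α : ℝ, 0 < uu α * (phi α + 1) := by
    intro α
    have h1 := quarter_le_uu α
    have h2 : (0:ℝ) < phi α + 1 := by
      rw [phi_eq]; nlinarith
    nlinarith
  have hcont : Continuous psiExt := by
    unfold psiExt
    apply Continuous.div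
    · fun_prop
    · exact Real.continuous_sqrt.comp (continuous_uu.mul (hphi.add continuous_const))
    · intro α
      exact (Real.sqrt_pos.mpr (hden α)).ne'
  refine ⟨psiExt, hcont.continuousOn, ?_, ?_⟩
  · intro α hα
    unfold psiExt psi
    have e1 : 2 * Real.cosh α ^ 2 - 2 * phi α = α ^ 2 * (2 * gg α ^ 2 - 2 * uu α) := by
      have := Real.cosh_sq α
      rw [this, phi_eq, sinh_eq_gg]
      ring
    have e2 : phi α ^ 2 - 1 = α ^ 2 * (uu α * (phi α + 1)) := by
      rw [phi_eq]; ring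
    rw [e1, e2, Real.sqrt_mul (sq_nonneg α), Real.sqrt_mul (sq_nonneg α),
      Real.sqrt_sq hα.le, sinh_eq_gg]
    rw [← mul_add, mul_div_mul_left _ _ hα.ne']
  · intro A hA
    obtain ⟨M, hM⟩ := (isCompact_Icc (a := (0:ℝ)) (b := A)).exists_bound_of_continuousOn
      hcont.continuousOn
    exact ⟨M, fun α hα => (le_abs_self _).trans (hM α hα)⟩
end
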